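/- Let $d \ge 1$ and $p \in [2,\infty)$. Set $\kappa'_p = \min(2^{-1}, 2^{2-p})$, $\kappa_p = p-1$ and $c_p = 2^{p(p-2)/2}\kappa_p^{p/2}$. Let $k : \mathbb{R}^d \times \mathbb{R}^d \to [0,\infty)$ be measurable and $u, v : \mathbb{R}^d \to \mathbb{R}$ measurable with $\mathcal{E}_k(u,u) < \infty$ and $\mathcal{E}_k(v,v) < \infty$. Then $\mathcal{E}_k(u-v,u-v) < \infty$, the quantity $D := \mathcal{E}_k(u,u-v) - \mathcal{E}_k(v,u-v)$ is well defined and nonnegative, and $D \ge \kappa'_p\, \mathcal{E}_k(u-v,u-v)$ as well as $D^{p/2} \le c_p\, \mathcal{E}_k(u-v,u-v)\,\big(\mathcal{E}_k(u,u) + \mathcal{E}_k(v,v)\big)^{(p-2)/2}$. -/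

import Mathlib

open MeasureTheory Real Filter

namespace NLAux

variable {p : ℝ}

variable {p : ℝ}

lemma meas_rpow_of {α : Type*} [MeasurableSpace α] {h : α → ℝ} (hh : Measurable h) (c : ℝ) :
    Measurable fun z => h z ^ c := by measurability

lemma rpow_two_mul (hp : 2 ≤ p) (t : ℝ) : |t| ^ (p - 2) * t * t = |t| ^ p := by
  rcases eq_or_ne t 0 with rfl | ht
  · simp [Real.zero_rpow (show p ≠ 0 by linarith)]
  · have h0 : (0:ℝ) < |t| := abs_pos.2 ht
    calc |t| ^ (p-2) * t * t = |t| ^ (p-2) * (|t| * |t|) := by rw [mul_assoc, abs_mul_abs_self]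
      _ = |t| ^ (p-2) * (|t| ^ (1:ℝ) * |t| ^ (1:ℝ)) := by rw [Real.rpow_one]
      _ = |t| ^ (p - 2 + (1 + 1)) := by rw [Real.rpow_add h0, Real.rpow_add h0]
      _ = |t| ^ p := by norm_num

lemma rpow_mul_self (hp0 : p ≠ 0) {x : ℝ} (hx : 0 ≤ x) : x ^ (p - 1) * x = x ^ p := by
  rcases hx.eq_or_lt with rfl | h
  · simp [Real.zero_rpow hp0, Real.zero_rpow (show p - 1 + 1 ≠ 0 by intro hh; exact hp0 (by linarith))]
  · have := Real.rpow_add h (p-1) 1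
    rw [Real.rpow_one] at this
    rw [← this]; congr 1; ring

lemma rpow_sub_two_mul_self (hp1 : p ≠ 1) {x : ℝ} (hx : 0 ≤ x) : x ^ (p - 2) * x = x ^ (p - 1) := by
  rcases hx.eq_or_lt with rfl | h
  · simp [Real.zero_rpow (show p - 1 ≠ 0 by intro hh; exact hp1 (by linarith)),
      Real.zero_rpow (show p - 2 + 1 ≠ 0 by intro hh; exact hp1 (by linarith))]
  · have := Real.rpow_add h (p-2) 1
    rw [Real.rpow_one] at this
    rw [← this]; congr 1; ring

lemma young1 (hp : 2 ≤ p) {x y : ℝ} (hx : 0 ≤ x) (hy : 0 ≤ y) :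
    x ^ (p - 1) * y ≤ x ^ p + y ^ p := by
  rcases le_total y x with h | h
  · have h1 : x ^ (p-1) * y ≤ x ^ (p-1) * x :=
      mul_le_mul_of_nonneg_left h (Real.rpow_nonneg hx _)
    rw [rpow_mul_self (show p ≠ 0 by linarith) hx] at h1
    have h2 : 0 ≤ y ^ p := Real.rpow_nonneg hy _
    linarith
  · have h1 : x ^ (p-1) ≤ y ^ (p-1) := Real.rpow_le_rpow hx h (by linarith)
    have h2 : x ^ (p-1) * y ≤ y ^ (p-1) * y := mul_le_mul_of_nonneg_right h1 hy
    rw [rpow_mul_self (show p ≠ 0 by linarith) hy] at h2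
    have h3 : 0 ≤ x ^ p := Real.rpow_nonneg hx _
    linarith

lemma two_rpow (hp0 : 0 ≤ p) {x y : ℝ} (hx : 0 ≤ x) (hy : 0 ≤ y) :
    (x + y) ^ p ≤ 2 ^ p * (x ^ p + y ^ p) := by
  have hm : (0:ℝ) ≤ max x y := le_max_of_le_left hx
  have hxy : x + y ≤ 2 * max x y := by
    rcases le_total x y with h | h
    · rw [max_eq_right h]; linarith
    · rw [max_eq_left h]; linarith
  have h1 : (x+y) ^ p ≤ (2 * max x y) ^ p := Real.rpow_le_rpow (by linarith) hxy hp0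
  have h2 : (2 * max x y : ℝ) ^ p = 2 ^ p * (max x y) ^ p := Real.mul_rpow (by norm_num) hm
  have h3 : (max x y) ^ p ≤ x ^ p + y ^ p := by
    rcases max_cases x y with ⟨he, _⟩ | ⟨he, _⟩ <;> rw [he]
    · have := Real.rpow_nonneg hy p; linarith
    · have := Real.rpow_nonneg hx p; linarith
  have h4 : (0:ℝ) ≤ 2 ^ p := Real.rpow_nonneg (by norm_num) _
  nlinarith

lemma sharp_rpow (q : ℝ) (hq : 0 ≤ q) {x y : ℝ} (hx : 0 ≤ x) (hy : 0 ≤ y) :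
    (x + y) ^ q ≤ max 1 (2 ^ (q - 1)) * (x ^ q + y ^ q) := by
  have hsum : 0 ≤ x ^ q + y ^ q := by
    have := Real.rpow_nonneg hx q; have := Real.rpow_nonneg hy q; linarith
  rcases le_total q 1 with h1 | h1
  · have h := NNReal.rpow_add_le_add_rpow x.toNNReal y.toNNReal hq h1
    have h' := NNReal.coe_le_coe.2 h
    push_cast [NNReal.coe_rpow, Real.coe_toNNReal _ hx, Real.coe_toNNReal _ hy,
      Real.coe_toNNReal _ (by linarith : (0:ℝ) ≤ x + y)] at h'
    have hmax : (1:ℝ) ≤ max 1 (2 ^ (q-1)) := le_max_left _ _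
    nlinarith
  · have h := NNReal.rpow_add_le_mul_rpow_add_rpow x.toNNReal y.toNNReal h1
    have h' := NNReal.coe_le_coe.2 h
    push_cast [NNReal.coe_rpow, Real.coe_toNNReal _ hx, Real.coe_toNNReal _ hy,
      Real.coe_toNNReal _ (by linarith : (0:ℝ) ≤ x + y)] at h'
    have hmax : (2:ℝ) ^ (q-1) ≤ max 1 (2 ^ (q-1)) := le_max_right _ _
    nlinarith

lemma lower_half (hp : 2 ≤ p) (a b : ℝ) :
    (|a| ^ (p-2) + |b| ^ (p-2)) / 2 * (a - b) ^ 2 ≤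
      (|a| ^ (p-2) * a - |b| ^ (p-2) * b) * (a - b) := by
  have hid : (|a| ^ (p-2) * a - |b| ^ (p-2) * b) * (a - b)
      = (|a| ^ (p-2) + |b| ^ (p-2)) / 2 * (a - b) ^ 2
        + (|a| ^ (p-2) - |b| ^ (p-2)) / 2 * (a ^ 2 - b ^ 2) := by ring
  rw [hid]
  have hnn : 0 ≤ (|a| ^ (p-2) - |b| ^ (p-2)) / 2 * (a ^ 2 - b ^ 2) := by
    have hsq : ∀ t : ℝ, t ^ 2 = |t| * |t| := fun t => by rw [abs_mul_abs_self]; ring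
    rcases le_total |b| |a| with h | h
    · have h1 : |b| ^ (p-2) ≤ |a| ^ (p-2) := Real.rpow_le_rpow (abs_nonneg _) h (by linarith)
      have h2 : b ^ 2 ≤ a ^ 2 := by
        rw [hsq a, hsq b]; exact mul_self_le_mul_self (abs_nonneg _) h
      exact mul_nonneg (by linarith) (by linarith)
    · have h1 : |a| ^ (p-2) ≤ |b| ^ (p-2) := Real.rpow_le_rpow (abs_nonneg _) h (by linarith)
      have h2 : a ^ 2 ≤ b ^ 2 := by
        rw [hsq a, hsq b]; exact mul_self_le_mul_self (abs_nonneg _) h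
      nlinarith
  linarith

lemma key_nonneg (hp : 2 ≤ p) (a b : ℝ) :
    0 ≤ (|a| ^ (p-2) * a - |b| ^ (p-2) * b) * (a - b) := by
  refine le_trans ?_ (lower_half hp a b)
  have := Real.rpow_nonneg (abs_nonneg a) (p-2)
  have := Real.rpow_nonneg (abs_nonneg b) (p-2)
  positivity

lemma lower_pointwise (hp : 2 ≤ p) {κ' : ℝ} (hκ' : κ' = min (2⁻¹:ℝ) ((2:ℝ) ^ (2 - p))) (a b : ℝ) :
    κ' * |a - b| ^ p ≤ (|a| ^ (p-2) * a - |b| ^ (p-2) * b) * (a - b) := by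
  have hX : 0 ≤ |a| ^ (p-2) := Real.rpow_nonneg (abs_nonneg _) _
  have hY : 0 ≤ |b| ^ (p-2) := Real.rpow_nonneg (abs_nonneg _) _
  have h1 : |a - b| ^ p = |a - b| ^ (p-2) * (a - b) ^ 2 := by
    rw [sq, ← mul_assoc, rpow_two_mul hp]
  have h2 : |a - b| ^ (p-2) ≤ max 1 ((2:ℝ) ^ (p-3)) * (|a| ^ (p-2) + |b| ^ (p-2)) := by
    calc |a - b| ^ (p-2) ≤ (|a| + |b|) ^ (p-2) :=
          Real.rpow_le_rpow (abs_nonneg _) (abs_sub a b) (by linarith)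
      _ ≤ max 1 ((2:ℝ) ^ (p-2-1)) * (|a| ^ (p-2) + |b| ^ (p-2)) :=
          sharp_rpow _ (by linarith) (abs_nonneg a) (abs_nonneg b)
      _ = max 1 ((2:ℝ) ^ (p-3)) * (|a| ^ (p-2) + |b| ^ (p-2)) := by
          rw [show p - 2 - 1 = p - 3 by ring]
  have hκ0 : 0 ≤ κ' := by
    rw [hκ']
    refine le_min (by norm_num) (Real.rpow_nonneg (by norm_num) _)
  have hκM : κ' * max 1 ((2:ℝ) ^ (p-3)) = 1 / 2 := by
    rcases le_total p 3 with h | h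
    · have e1 : (2:ℝ) ^ (p-3) ≤ 1 := Real.rpow_le_one_of_one_le_of_nonpos (by norm_num) (by linarith)
      have e2 : (2:ℝ)⁻¹ ≤ (2:ℝ) ^ (2-p) := by
        rw [show (2:ℝ)⁻¹ = (2:ℝ) ^ (-1:ℝ) by rw [Real.rpow_neg_one]]
        exact Real.rpow_le_rpow_of_exponent_le (by norm_num) (by linarith)
      rw [hκ', min_eq_left e2, max_eq_left e1]; norm_num
    · have e1 : (1:ℝ) ≤ (2:ℝ) ^ (p-3) := by
        have := Real.rpow_le_rpow_of_exponent_le (by norm_num : (1:ℝ) ≤ 2) (by linarith : (0:ℝ) ≤ p - 3)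
        rwa [Real.rpow_zero] at this
      have e2 : (2:ℝ) ^ (2-p) ≤ (2:ℝ)⁻¹ := by
        rw [show (2:ℝ)⁻¹ = (2:ℝ) ^ (-1:ℝ) by rw [Real.rpow_neg_one]]
        exact Real.rpow_le_rpow_of_exponent_le (by norm_num) (by linarith)
      rw [hκ', min_eq_right e2, max_eq_right e1, ← Real.rpow_add (by norm_num : (0:ℝ) < 2),
        show 2 - p + (p - 3) = (-1:ℝ) by ring, Real.rpow_neg_one]
      norm_num
  calc κ' * |a - b| ^ p = κ' * |a - b| ^ (p-2) * (a-b) ^ 2 := by rw [h1]; ring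
    _ ≤ κ' * (max 1 ((2:ℝ) ^ (p-3)) * (|a| ^ (p-2) + |b| ^ (p-2))) * (a-b) ^ 2 := by
        exact mul_le_mul_of_nonneg_right (mul_le_mul_of_nonneg_left h2 hκ0) (sq_nonneg _)
    _ = (|a| ^ (p-2) + |b| ^ (p-2)) / 2 * (a-b) ^ 2 := by
        rw [show κ' * (max 1 ((2:ℝ) ^ (p-3)) * (|a| ^ (p-2) + |b| ^ (p-2)))
            = (κ' * max 1 ((2:ℝ) ^ (p-3))) * (|a| ^ (p-2) + |b| ^ (p-2)) by ring, hκM]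
        ring
    _ ≤ _ := lower_half hp a b

lemma hasDerivAt_phi (hp : 2 < p) (t : ℝ) :
    HasDerivAt (fun s : ℝ => |s| ^ (p-2) * s) ((p-1) * |t| ^ (p-2)) t := by
  rcases lt_trichotomy t 0 with ht | rfl | ht
  · have h2 : HasDerivAt (fun s : ℝ => -s) (-1) t := (hasDerivAt_id t).neg
    have h3 : HasDerivAt (fun y : ℝ => y ^ (p-1)) ((p-1) * (-t) ^ (p-1-1)) (-t) :=
      Real.hasDerivAt_rpow_const (Or.inl (by intro hh; nlinarith [neg_pos.2 ht]))
    have h1 : HasDerivAt (fun s : ℝ => -((-s) ^ (p-1))) ((p-1) * (-t) ^ (p-2)) t := by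
      have h4 := (h3.comp t h2).neg
      refine h4.congr_deriv ?_
      rw [show p - 1 - 1 = p - 2 by ring]
      simp [Function.comp]
    have heq : (fun s : ℝ => |s| ^ (p-2) * s) =ᶠ[nhds t] fun s => -((-s) ^ (p-1)) := by
      filter_upwards [Iio_mem_nhds ht] with s hs
      have hs' : s < 0 := hs
      rw [abs_of_neg hs']
      rw [← rpow_sub_two_mul_self (show p ≠ 1 by linarith) (by linarith [hs'] : (0:ℝ) ≤ -s)]
      ring
    have h5 := h1.congr_of_eventuallyEq heq
    rw [abs_of_neg ht]
    exact h5
  · rw [hasDerivAt_iff_tendsto_slope]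
    have hval : (p-1) * |(0:ℝ)| ^ (p-2) = 0 := by
      simp [Real.zero_rpow (show p - 2 ≠ 0 by linarith)]
    rw [hval]
    have hsl : (fun s : ℝ => |s| ^ (p-2)) =ᶠ[nhdsWithin (0:ℝ) {(0:ℝ)}ᶜ]
        slope (fun s : ℝ => |s| ^ (p-2) * s) 0 := by
      filter_upwards [self_mem_nhdsWithin] with s hs
      have hs0 : (s:ℝ) ≠ 0 := hs
      rw [slope_def_field]
      field_simp
      simp
    refine Tendsto.congr' hsl ?_
    have hg : ContinuousAt (fun x : ℝ => x ^ (p-2)) (|(0:ℝ)|) := by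
      rw [abs_zero]; exact Real.continuousAt_rpow_const 0 _ (Or.inr (by linarith))
    have hcont : ContinuousAt (fun s : ℝ => |s| ^ (p-2)) 0 :=
      hg.comp continuous_abs.continuousAt
    have h0 : |(0:ℝ)| ^ (p-2) = 0 := by
      rw [abs_zero]; exact Real.zero_rpow (by linarith)
    have := hcont.tendsto
    rw [h0] at this
    exact this.mono_left nhdsWithin_le_nhds
  · have h3 : HasDerivAt (fun y : ℝ => y ^ (p-1)) ((p-1) * t ^ (p-1-1)) t :=
      Real.hasDerivAt_rpow_const (Or.inl (ne_of_gt ht))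
    have heq : (fun s : ℝ => |s| ^ (p-2) * s) =ᶠ[nhds t] fun s => s ^ (p-1) := by
      filter_upwards [Ioi_mem_nhds ht] with s hs
      rw [abs_of_pos hs, rpow_sub_two_mul_self (show p ≠ 1 by linarith) hs.le]
    have h5 := h3.congr_of_eventuallyEq heq
    rw [show p - 1 - 1 = p - 2 by ring] at h5
    rw [abs_of_pos ht]
    exact h5

lemma phi_lipschitz (hp : 2 < p) (a b : ℝ) :
    |(|a| ^ (p-2) * a - |b| ^ (p-2) * b)| ≤ (p-1) * (|a| + |b|) ^ (p-2) * |a - b| := by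
  have bound : ∀ x ∈ Set.uIcc a b, ‖(p-1) * |x| ^ (p-2)‖ ≤ (p-1) * (|a| + |b|) ^ (p-2) := by
    intro x hx
    have hx1 : |x| ≤ |a| + |b| := by
      rcases Set.mem_uIcc.1 hx with ⟨h1, h2⟩ | ⟨h1, h2⟩
      · refine abs_le.2 ⟨?_, ?_⟩
        · linarith [neg_abs_le a, abs_nonneg b]
        · linarith [le_abs_self b, abs_nonneg a]
      · refine abs_le.2 ⟨?_, ?_⟩
        · linarith [neg_abs_le b, abs_nonneg a]
        · linarith [le_abs_self a, abs_nonneg b]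
    have hnn : 0 ≤ (p-1) * |x| ^ (p-2) :=
      mul_nonneg (by linarith) (Real.rpow_nonneg (abs_nonneg _) _)
    rw [Real.norm_eq_abs, abs_of_nonneg hnn]
    exact mul_le_mul_of_nonneg_left (Real.rpow_le_rpow (abs_nonneg x) hx1 (by linarith))
      (by linarith)
  have H := Convex.norm_image_sub_le_of_norm_hasDerivWithin_le
    (fun x _ => (hasDerivAt_phi hp x).hasDerivWithinAt) bound (convex_uIcc a b)
    Set.right_mem_uIcc Set.left_mem_uIcc
  simpa [Real.norm_eq_abs] using H

lemma upper_pointwise (hp : 2 < p) (a b : ℝ) :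
    (|a| ^ (p-2) * a - |b| ^ (p-2) * b) * (a - b)
      ≤ (p-1) * ((|a| + |b|) ^ (p-2) * (a - b) ^ 2) := by
  have h1 := phi_lipschitz hp a b
  have h2 : (|a| ^ (p-2) * a - |b| ^ (p-2) * b) * (a - b)
      ≤ |(|a| ^ (p-2) * a - |b| ^ (p-2) * b)| * |a - b| := by
    rw [← abs_mul]; exact le_abs_self _
  have h3 := mul_le_mul_of_nonneg_right h1 (abs_nonneg (a - b))
  have h4 : |a - b| * |a - b| = (a - b) ^ 2 := by rw [abs_mul_abs_self]; ring
  calc (|a| ^ (p-2) * a - |b| ^ (p-2) * b) * (a - b)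
      ≤ |(|a| ^ (p-2) * a - |b| ^ (p-2) * b)| * |a - b| := h2
    _ ≤ (p-1) * (|a| + |b|) ^ (p-2) * |a - b| * |a - b| := h3
    _ = (p-1) * ((|a| + |b|) ^ (p-2) * (a - b) ^ 2) := by rw [mul_assoc, h4]; ring

lemma memℒp_of_int {α : Type*} [MeasurableSpace α] {μ : Measure α} {r : ℝ} (hr : 1 ≤ r)
    {φ : α → ℝ} (hm : AEStronglyMeasurable φ μ) (h0 : ∀ z, 0 ≤ φ z)
    (hint : Integrable (fun z => φ z ^ r) μ) : MemLp φ (ENNReal.ofReal r) μ := by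
  have hq0 : ENNReal.ofReal r ≠ 0 := by
    simp only [ne_eq, ENNReal.ofReal_eq_zero, not_le]; linarith
  have hqt : ENNReal.ofReal r ≠ ⊤ := ENNReal.ofReal_ne_top
  have h1 : MemLp (fun x => ‖φ x‖ ^ (ENNReal.ofReal r).toReal)
      (ENNReal.ofReal r / ENNReal.ofReal r) μ := by
    rw [ENNReal.div_self hq0 hqt]
    have heq : (fun x => ‖φ x‖ ^ (ENNReal.ofReal r).toReal) = fun z => φ z ^ r := by
      funext x
      rw [Real.norm_of_nonneg (h0 x), ENNReal.toReal_ofReal (by linarith : (0:ℝ) ≤ r)]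
    rw [heq, memLp_one_iff_integrable]
    exact hint
  exact (memLp_norm_rpow_iff hm hq0 hqt).1 h1

theorem main {α : Type*} [MeasurableSpace α] (μ : Measure α) (p κ' c : ℝ) (hp : 2 ≤ p)
    (hκ' : κ' = min (2⁻¹:ℝ) ((2:ℝ) ^ (2 - p)))
    (hc : c = (2:ℝ) ^ (p * (p - 2) / 2) * (p - 1) ^ (p / 2))
    (f g K : α → ℝ) (hf : Measurable f) (hg : Measurable g) (hKm : Measurable K)
    (hK0 : ∀ z, 0 ≤ K z)
    (hEf : Integrable (fun z => |f z| ^ p * K z) μ)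
    (hEg : Integrable (fun z => |g z| ^ p * K z) μ) :
    Integrable (fun z => |f z - g z| ^ p * K z) μ ∧
    Integrable (fun z => |f z| ^ (p-2) * f z * (f z - g z) * K z) μ ∧
    Integrable (fun z => |g z| ^ (p-2) * g z * (f z - g z) * K z) μ ∧
    (0 ≤ (∫ z, |f z| ^ (p-2) * f z * (f z - g z) * K z ∂μ)
        - ∫ z, |g z| ^ (p-2) * g z * (f z - g z) * K z ∂μ) ∧
    (κ' * ∫ z, |f z - g z| ^ p * K z ∂μ ≤
      (∫ z, |f z| ^ (p-2) * f z * (f z - g z) * K z ∂μ)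
        - ∫ z, |g z| ^ (p-2) * g z * (f z - g z) * K z ∂μ) ∧
    ((∫ z, |f z| ^ (p-2) * f z * (f z - g z) * K z ∂μ)
        - ∫ z, |g z| ^ (p-2) * g z * (f z - g z) * K z ∂μ) ^ (p/2) ≤
      c * (∫ z, |f z - g z| ^ p * K z ∂μ) *
        ((∫ z, |f z| ^ p * K z ∂μ) + ∫ z, |g z| ^ p * K z ∂μ) ^ ((p-2)/2) := by
  have hp0 : (0:ℝ) < p := by linarith
  have hfg : Measurable fun z => f z - g z := hf.sub hg
  have mW : Measurable fun z => |f z - g z| ^ p * K z :=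
    (meas_rpow_of hfg.abs p).mul hKm
  have mA : Measurable fun z => |f z| ^ (p-2) * f z * (f z - g z) * K z :=
    (((meas_rpow_of hf.abs (p-2)).mul hf).mul hfg).mul hKm
  have mB : Measurable fun z => |g z| ^ (p-2) * g z * (f z - g z) * K z :=
    (((meas_rpow_of hg.abs (p-2)).mul hg).mul hfg).mul hKm
  -- Integrability of W
  have hW : Integrable (fun z => |f z - g z| ^ p * K z) μ := by
    refine ((hEf.add hEg).const_mul ((2:ℝ) ^ p)).mono' mW.aestronglyMeasurable
      (Eventually.of_forall fun z => ?_)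
    have h0 : 0 ≤ |f z - g z| ^ p * K z :=
      mul_nonneg (Real.rpow_nonneg (abs_nonneg _) _) (hK0 z)
    rw [Real.norm_of_nonneg h0]
    have h1 : |f z - g z| ^ p ≤ 2 ^ p * (|f z| ^ p + |g z| ^ p) :=
      le_trans (Real.rpow_le_rpow (abs_nonneg _) (abs_sub (f z) (g z)) (by linarith))
        (two_rpow (by linarith) (abs_nonneg _) (abs_nonneg _))
    calc |f z - g z| ^ p * K z ≤ (2 ^ p * (|f z| ^ p + |g z| ^ p)) * K z :=
          mul_le_mul_of_nonneg_right h1 (hK0 z)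
      _ = 2 ^ p * (|f z| ^ p * K z + |g z| ^ p * K z) := by ring
  -- Integrability of A
  have habsA : ∀ z, ‖|f z| ^ (p-2) * f z * (f z - g z) * K z‖
      = |f z| ^ (p-2) * |f z| * |f z - g z| * K z := by
    intro z
    rw [Real.norm_eq_abs, abs_mul, abs_mul, abs_mul,
      abs_of_nonneg (Real.rpow_nonneg (abs_nonneg (f z)) _), abs_of_nonneg (hK0 z)]
  have habsB : ∀ z, ‖|g z| ^ (p-2) * g z * (f z - g z) * K z‖
      = |g z| ^ (p-2) * |g z| * |f z - g z| * K z := by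
    intro z
    rw [Real.norm_eq_abs, abs_mul, abs_mul, abs_mul,
      abs_of_nonneg (Real.rpow_nonneg (abs_nonneg (g z)) _), abs_of_nonneg (hK0 z)]
  have hA : Integrable (fun z => |f z| ^ (p-2) * f z * (f z - g z) * K z) μ := by
    refine (hEf.add hW).mono' mA.aestronglyMeasurable (Eventually.of_forall fun z => ?_)
    rw [habsA z, rpow_sub_two_mul_self (show p ≠ 1 by linarith) (abs_nonneg (f z))]
    calc |f z| ^ (p-1) * |f z - g z| * K z
        ≤ (|f z| ^ p + |f z - g z| ^ p) * K z :=
          mul_le_mul_of_nonneg_right (young1 hp (abs_nonneg _) (abs_nonneg _)) (hK0 z)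
      _ = |f z| ^ p * K z + |f z - g z| ^ p * K z := by ring
  have hB : Integrable (fun z => |g z| ^ (p-2) * g z * (f z - g z) * K z) μ := by
    refine (hEg.add hW).mono' mB.aestronglyMeasurable (Eventually.of_forall fun z => ?_)
    rw [habsB z, rpow_sub_two_mul_self (show p ≠ 1 by linarith) (abs_nonneg (g z))]
    have h1 : |g z| ^ (p-1) * |f z - g z| ≤ |g z| ^ p + |f z - g z| ^ p :=
      young1 hp (abs_nonneg _) (abs_nonneg _)
    calc |g z| ^ (p-1) * |f z - g z| * K z
        ≤ (|g z| ^ p + |f z - g z| ^ p) * K z := mul_le_mul_of_nonneg_right h1 (hK0 z)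
      _ = |g z| ^ p * K z + |f z - g z| ^ p * K z := by ring
  have hDeq : (∫ z, |f z| ^ (p-2) * f z * (f z - g z) * K z ∂μ)
      - (∫ z, |g z| ^ (p-2) * g z * (f z - g z) * K z ∂μ)
      = ∫ z, (|f z| ^ (p-2) * f z * (f z - g z) * K z
          - |g z| ^ (p-2) * g z * (f z - g z) * K z) ∂μ := (integral_sub hA hB).symm
  have pid : ∀ z, |f z| ^ (p-2) * f z * (f z - g z) * K z
      - |g z| ^ (p-2) * g z * (f z - g z) * K z
      = (|f z| ^ (p-2) * f z - |g z| ^ (p-2) * g z) * (f z - g z) * K z := fun z => by ring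
  have hDnn : 0 ≤ (∫ z, |f z| ^ (p-2) * f z * (f z - g z) * K z ∂μ)
      - ∫ z, |g z| ^ (p-2) * g z * (f z - g z) * K z ∂μ := by
    rw [hDeq]
    refine integral_nonneg fun z => ?_
    rw [pid z]
    exact mul_nonneg (key_nonneg hp _ _) (hK0 z)
  have hW0 : (0:ℝ) ≤ ∫ z, |f z - g z| ^ p * K z ∂μ :=
    integral_nonneg fun z => mul_nonneg (Real.rpow_nonneg (abs_nonneg _) _) (hK0 z)
  have hEf0 : (0:ℝ) ≤ ∫ z, |f z| ^ p * K z ∂μ :=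
    integral_nonneg fun z => mul_nonneg (Real.rpow_nonneg (abs_nonneg _) _) (hK0 z)
  have hEg0 : (0:ℝ) ≤ ∫ z, |g z| ^ p * K z ∂μ :=
    integral_nonneg fun z => mul_nonneg (Real.rpow_nonneg (abs_nonneg _) _) (hK0 z)
  refine ⟨hW, hA, hB, hDnn, ?_, ?_⟩
  · -- lower bound
    have hκ0 : 0 ≤ κ' := by
      rw [hκ']
      exact le_min (by norm_num) (Real.rpow_nonneg (by norm_num) _)
    rw [hDeq]
    have hpt : ∀ z, κ' * (|f z - g z| ^ p * K z)
        ≤ |f z| ^ (p-2) * f z * (f z - g z) * K z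
          - |g z| ^ (p-2) * g z * (f z - g z) * K z := by
      intro z
      rw [pid z]
      have := mul_le_mul_of_nonneg_right (lower_pointwise hp hκ' (f z) (g z)) (hK0 z)
      calc κ' * (|f z - g z| ^ p * K z) = κ' * |f z - g z| ^ p * K z := by ring
        _ ≤ _ := this
    calc κ' * ∫ z, |f z - g z| ^ p * K z ∂μ
        = ∫ z, κ' * (|f z - g z| ^ p * K z) ∂μ := (integral_const_mul κ' _).symm
      _ ≤ _ := integral_mono (hW.const_mul κ') (hA.sub hB) hpt
  · -- upper bound
    rcases eq_or_lt_of_le hp with hp2 | hp2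
    · -- p = 2
      subst hp2
      have hDW : (∫ z, |f z| ^ ((2:ℝ)-2) * f z * (f z - g z) * K z ∂μ)
          - (∫ z, |g z| ^ ((2:ℝ)-2) * g z * (f z - g z) * K z ∂μ)
          = ∫ z, |f z - g z| ^ (2:ℝ) * K z ∂μ := by
        rw [hDeq]
        refine integral_congr_ae (Eventually.of_forall fun z => ?_)
        have e0 : ∀ x : ℝ, |x| ^ ((2:ℝ)-2) = 1 := fun x => by
          rw [show (2:ℝ)-2 = 0 by norm_num, Real.rpow_zero]
        have e2 : |f z - g z| ^ (2:ℝ) = (f z - g z) ^ 2 := by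
          rw [show (2:ℝ) = ((2:ℕ):ℝ) by norm_num, Real.rpow_natCast, sq_abs]
        simp only [e0, e2]
        ring
      rw [hDW, hc]
      norm_num
    · -- 2 < p
      have hpne : p ≠ 0 := by linarith
      have hp2ne : p - 2 ≠ 0 := by linarith
      have hT : Integrable (fun z => (|f z| + |g z|) ^ p * K z) μ := by
        refine ((hEf.add hEg).const_mul ((2:ℝ) ^ p)).mono'
          ((meas_rpow_of (hf.abs.add hg.abs) p).mul hKm).aestronglyMeasurable
          (Eventually.of_forall fun z => ?_)
        have h0 : 0 ≤ (|f z| + |g z|) ^ p * K z :=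
          mul_nonneg (Real.rpow_nonneg (by positivity) _) (hK0 z)
        rw [Real.norm_of_nonneg h0]
        calc (|f z| + |g z|) ^ p * K z
            ≤ (2 ^ p * (|f z| ^ p + |g z| ^ p)) * K z :=
              mul_le_mul_of_nonneg_right
                (two_rpow (by linarith) (abs_nonneg _) (abs_nonneg _)) (hK0 z)
          _ = 2 ^ p * (|f z| ^ p * K z + |g z| ^ p * K z) := by ring
      have hIkey : ∀ z, (|f z| + |g z|) ^ (p-2) * (f z - g z) ^ 2 * K z
          ≤ (|f z| + |g z|) ^ p * K z := by
        intro z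
        have ht0 : (0:ℝ) ≤ |f z| + |g z| := by positivity
        have habs : |(|f z| + |g z|)| = |f z| + |g z| := abs_of_nonneg ht0
        have hkey : (|f z| + |g z|) ^ (p-2) * ((|f z| + |g z|) * (|f z| + |g z|))
            = (|f z| + |g z|) ^ p := by
          have h := rpow_two_mul hp (|f z| + |g z|)
          rw [habs] at h
          rw [← mul_assoc]
          exact h
        have hsq : (f z - g z) ^ 2 ≤ (|f z| + |g z|) * (|f z| + |g z|) := by
          have h1 : |f z - g z| ≤ |f z| + |g z| := abs_sub _ _
          calc (f z - g z) ^ 2 = |f z - g z| * |f z - g z| := by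
                rw [abs_mul_abs_self]; ring
            _ ≤ (|f z| + |g z|) * (|f z| + |g z|) :=
                mul_le_mul h1 h1 (abs_nonneg _) ht0
        calc (|f z| + |g z|) ^ (p-2) * (f z - g z) ^ 2 * K z
            ≤ (|f z| + |g z|) ^ (p-2) * ((|f z| + |g z|) * (|f z| + |g z|)) * K z := by
              refine mul_le_mul_of_nonneg_right ?_ (hK0 z)
              exact mul_le_mul_of_nonneg_left hsq (Real.rpow_nonneg ht0 _)
          _ = (|f z| + |g z|) ^ p * K z := by rw [hkey]
      have hI : Integrable (fun z => (|f z| + |g z|) ^ (p-2) * (f z - g z) ^ 2 * K z) μ := by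
        refine hT.mono'
          (((meas_rpow_of (hf.abs.add hg.abs) (p-2)).mul (hfg.pow_const 2)).mul
            hKm).aestronglyMeasurable (Eventually.of_forall fun z => ?_)
        have h0 : 0 ≤ (|f z| + |g z|) ^ (p-2) * (f z - g z) ^ 2 * K z :=
          mul_nonneg (mul_nonneg (Real.rpow_nonneg (by positivity) _) (sq_nonneg _)) (hK0 z)
        rw [Real.norm_of_nonneg h0]
        exact hIkey z
      have hI0 : (0:ℝ) ≤ ∫ z, (|f z| + |g z|) ^ (p-2) * (f z - g z) ^ 2 * K z ∂μ :=
        integral_nonneg fun z =>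
          mul_nonneg (mul_nonneg (Real.rpow_nonneg (by positivity) _) (sq_nonneg _)) (hK0 z)
      have hDI : (∫ z, |f z| ^ (p-2) * f z * (f z - g z) * K z ∂μ)
          - (∫ z, |g z| ^ (p-2) * g z * (f z - g z) * K z ∂μ)
          ≤ (p-1) * ∫ z, (|f z| + |g z|) ^ (p-2) * (f z - g z) ^ 2 * K z ∂μ := by
        rw [hDeq]
        have hpt : ∀ z, |f z| ^ (p-2) * f z * (f z - g z) * K z
            - |g z| ^ (p-2) * g z * (f z - g z) * K z
            ≤ (p-1) * ((|f z| + |g z|) ^ (p-2) * (f z - g z) ^ 2 * K z) := by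
          intro z
          rw [pid z]
          have := mul_le_mul_of_nonneg_right (upper_pointwise hp2 (f z) (g z)) (hK0 z)
          calc (|f z| ^ (p-2) * f z - |g z| ^ (p-2) * g z) * (f z - g z) * K z
              ≤ ((p-1) * ((|f z| + |g z|) ^ (p-2) * (f z - g z) ^ 2)) * K z := this
            _ = (p-1) * ((|f z| + |g z|) ^ (p-2) * (f z - g z) ^ 2 * K z) := by ring
        calc (∫ z, (|f z| ^ (p-2) * f z * (f z - g z) * K z
              - |g z| ^ (p-2) * g z * (f z - g z) * K z) ∂μ)
            ≤ ∫ z, (p-1) * ((|f z| + |g z|) ^ (p-2) * (f z - g z) ^ 2 * K z) ∂μ :=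
              integral_mono (hA.sub hB) (hI.const_mul _) hpt
          _ = (p-1) * ∫ z, (|f z| + |g z|) ^ (p-2) * (f z - g z) ^ 2 * K z ∂μ :=
              integral_const_mul _ _
      -- Hölder
      have hconj : Real.HolderConjugate (p/2) (p/(p-2)) := by
        refine (Real.holderConjugate_iff_eq_conjExponent (by linarith)).2 ?_
        field_simp
      have hφ0 : ∀ z, 0 ≤ |f z - g z| ^ (2:ℝ) * K z ^ (2/p) :=
        fun z => mul_nonneg (Real.rpow_nonneg (abs_nonneg _) _)
          (Real.rpow_nonneg (hK0 z) _)
      have hψ0 : ∀ z, 0 ≤ (|f z| + |g z|) ^ (p-2) * K z ^ ((p-2)/p) :=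
        fun z => mul_nonneg (Real.rpow_nonneg (by positivity) _)
          (Real.rpow_nonneg (hK0 z) _)
      have hφm : Measurable fun z => |f z - g z| ^ (2:ℝ) * K z ^ (2/p) :=
        (meas_rpow_of hfg.abs 2).mul (meas_rpow_of hKm (2/p))
      have hψm : Measurable fun z => (|f z| + |g z|) ^ (p-2) * K z ^ ((p-2)/p) :=
        (meas_rpow_of (hf.abs.add hg.abs) (p-2)).mul (meas_rpow_of hKm ((p-2)/p))
      have hφr : (fun z => (|f z - g z| ^ (2:ℝ) * K z ^ (2/p)) ^ (p/2))
          = fun z => |f z - g z| ^ p * K z := by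
        funext z
        rw [Real.mul_rpow (Real.rpow_nonneg (abs_nonneg _) _) (Real.rpow_nonneg (hK0 z) _),
          ← Real.rpow_mul (abs_nonneg _), ← Real.rpow_mul (hK0 z),
          show (2:ℝ) * (p/2) = p by ring, show (2/p) * (p/2) = 1 by field_simp,
          Real.rpow_one]
      have hψr : (fun z => ((|f z| + |g z|) ^ (p-2) * K z ^ ((p-2)/p)) ^ (p/(p-2)))
          = fun z => (|f z| + |g z|) ^ p * K z := by
        funext z
        rw [Real.mul_rpow (Real.rpow_nonneg (by positivity) _) (Real.rpow_nonneg (hK0 z) _),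
          ← Real.rpow_mul (by positivity : (0:ℝ) ≤ |f z| + |g z|), ← Real.rpow_mul (hK0 z),
          show (p-2) * (p/(p-2)) = p by field_simp,
          show ((p-2)/p) * (p/(p-2)) = 1 by field_simp, Real.rpow_one]
      have hφψ : ∀ z, (|f z - g z| ^ (2:ℝ) * K z ^ (2/p))
          * ((|f z| + |g z|) ^ (p-2) * K z ^ ((p-2)/p))
          = (|f z| + |g z|) ^ (p-2) * (f z - g z) ^ 2 * K z := by
        intro z
        have hK1 : K z ^ (2/p) * K z ^ ((p-2)/p) = K z := by
          rw [← Real.rpow_add' (hK0 z) (by rw [show 2/p + (p-2)/p = 1 by field_simp; ring]; norm_num),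
            show 2/p + (p-2)/p = 1 by field_simp; ring, Real.rpow_one]
        have h2 : |f z - g z| ^ (2:ℝ) = (f z - g z) ^ 2 := by
          rw [show (2:ℝ) = ((2:ℕ):ℝ) by norm_num, Real.rpow_natCast, sq_abs]
        calc (|f z - g z| ^ (2:ℝ) * K z ^ (2/p))
            * ((|f z| + |g z|) ^ (p-2) * K z ^ ((p-2)/p))
            = (|f z - g z| ^ (2:ℝ)) * (|f z| + |g z|) ^ (p-2)
              * (K z ^ (2/p) * K z ^ ((p-2)/p)) := by ring
          _ = (|f z| + |g z|) ^ (p-2) * (f z - g z) ^ 2 * K z := by rw [hK1, h2]; ring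
      have hMφ : MemLp (fun z => |f z - g z| ^ (2:ℝ) * K z ^ (2/p)) (ENNReal.ofReal (p/2)) μ := by
        refine memℒp_of_int (by linarith) hφm.aestronglyMeasurable hφ0 ?_
        rw [hφr]; exact hW
      have hMψ : MemLp (fun z => (|f z| + |g z|) ^ (p-2) * K z ^ ((p-2)/p))
          (ENNReal.ofReal (p/(p-2))) μ := by
        refine memℒp_of_int ?_ hψm.aestronglyMeasurable hψ0 ?_
        · rw [le_div_iff₀ (by linarith : (0:ℝ) < p - 2)]; linarith
        · rw [hψr]; exact hT
      have hHold := integral_mul_le_Lp_mul_Lq_of_nonneg hconj (ae_of_all _ hφ0) (ae_of_all _ hψ0)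
        hMφ hMψ
      rw [hφr, hψr] at hHold
      have hIeq : (∫ z, (|f z - g z| ^ (2:ℝ) * K z ^ (2/p))
          * ((|f z| + |g z|) ^ (p-2) * K z ^ ((p-2)/p)) ∂μ)
          = ∫ z, (|f z| + |g z|) ^ (p-2) * (f z - g z) ^ 2 * K z ∂μ :=
        integral_congr_ae (Eventually.of_forall fun z => hφψ z)
      rw [hIeq, one_div_div, one_div_div] at hHold
      -- hHold : I ≤ W' ^ (2/p) * T' ^ ((p-2)/p)
      have hT0 : (0:ℝ) ≤ ∫ z, (|f z| + |g z|) ^ p * K z ∂μ :=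
        integral_nonneg fun z => mul_nonneg (Real.rpow_nonneg (by positivity) _) (hK0 z)
      have hTle : (∫ z, (|f z| + |g z|) ^ p * K z ∂μ)
          ≤ 2 ^ p * ((∫ z, |f z| ^ p * K z ∂μ) + ∫ z, |g z| ^ p * K z ∂μ) := by
        have hpt : ∀ z, (|f z| + |g z|) ^ p * K z
            ≤ 2 ^ p * (|f z| ^ p * K z + |g z| ^ p * K z) := by
          intro z
          calc (|f z| + |g z|) ^ p * K z
              ≤ (2 ^ p * (|f z| ^ p + |g z| ^ p)) * K z :=
                mul_le_mul_of_nonneg_right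
                  (two_rpow (by linarith) (abs_nonneg _) (abs_nonneg _)) (hK0 z)
            _ = 2 ^ p * (|f z| ^ p * K z + |g z| ^ p * K z) := by ring
        calc (∫ z, (|f z| + |g z|) ^ p * K z ∂μ)
            ≤ ∫ z, 2 ^ p * (|f z| ^ p * K z + |g z| ^ p * K z) ∂μ :=
              integral_mono hT ((hEf.add hEg).const_mul _) hpt
          _ = 2 ^ p * ((∫ z, |f z| ^ p * K z ∂μ) + ∫ z, |g z| ^ p * K z ∂μ) := by
              rw [integral_const_mul, integral_add hEf hEg]
      have hp1 : (0:ℝ) ≤ p - 1 := by linarith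
      calc ((∫ z, |f z| ^ (p-2) * f z * (f z - g z) * K z ∂μ)
            - ∫ z, |g z| ^ (p-2) * g z * (f z - g z) * K z ∂μ) ^ (p/2)
          ≤ ((p-1) * ∫ z, (|f z| + |g z|) ^ (p-2) * (f z - g z) ^ 2 * K z ∂μ) ^ (p/2) :=
            Real.rpow_le_rpow hDnn hDI (by positivity)
        _ = (p-1) ^ (p/2) * (∫ z, (|f z| + |g z|) ^ (p-2) * (f z - g z) ^ 2 * K z ∂μ) ^ (p/2) :=
            Real.mul_rpow hp1 hI0
        _ ≤ (p-1) ^ (p/2) * ((∫ z, |f z - g z| ^ p * K z ∂μ) ^ (2/p)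
              * (∫ z, (|f z| + |g z|) ^ p * K z ∂μ) ^ ((p-2)/p)) ^ (p/2) := by
            refine mul_le_mul_of_nonneg_left
              (Real.rpow_le_rpow hI0 hHold (by positivity)) (Real.rpow_nonneg hp1 _)
        _ = (p-1) ^ (p/2) * ((∫ z, |f z - g z| ^ p * K z ∂μ)
              * (∫ z, (|f z| + |g z|) ^ p * K z ∂μ) ^ ((p-2)/2)) := by
            rw [Real.mul_rpow (Real.rpow_nonneg hW0 _) (Real.rpow_nonneg hT0 _),
              ← Real.rpow_mul hW0, ← Real.rpow_mul hT0,
              show (2/p) * (p/2) = 1 by field_simp,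
              show ((p-2)/p) * (p/2) = (p-2)/2 by field_simp, Real.rpow_one]
        _ ≤ (p-1) ^ (p/2) * ((∫ z, |f z - g z| ^ p * K z ∂μ)
              * (2 ^ p * ((∫ z, |f z| ^ p * K z ∂μ) + ∫ z, |g z| ^ p * K z ∂μ)) ^ ((p-2)/2)) := by
            refine mul_le_mul_of_nonneg_left
              (mul_le_mul_of_nonneg_left
                (Real.rpow_le_rpow hT0 hTle (by linarith)) hW0) (Real.rpow_nonneg hp1 _)
        _ = c * (∫ z, |f z - g z| ^ p * K z ∂μ) *
              ((∫ z, |f z| ^ p * K z ∂μ) + ∫ z, |g z| ^ p * K z ∂μ) ^ ((p-2)/2) := by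
            rw [hc, Real.mul_rpow (by positivity : (0:ℝ) ≤ (2:ℝ) ^ p) (by linarith),
              ← Real.rpow_mul (by norm_num : (0:ℝ) ≤ 2),
              show p * ((p-2)/2) = p * (p-2) / 2 by ring]
            ring


end NLAux



open MeasureTheory

/-- The nonlocal form `𝓔_k(u,v)` over `ℝ^d × ℝ^d` (product Lebesgue measure). -/
noncomputable def nlForm (d : ℕ) (p : ℝ)
    (k : EuclideanSpace ℝ (Fin d) → EuclideanSpace ℝ (Fin d) → ℝ)
    (u v : EuclideanSpace ℝ (Fin d) → ℝ) : ℝ :=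
  ∫ z : EuclideanSpace ℝ (Fin d) × EuclideanSpace ℝ (Fin d),
    |u z.1 - u z.2| ^ (p - 2) * (u z.1 - u z.2) * (v z.1 - v z.2) * k z.1 z.2

/-- The (finite) energy `𝓔_k(u,u) = ∫∫ |u(x)-u(y)|^p k(x,y)` as a real number. -/
noncomputable def nlDiag (d : ℕ) (p : ℝ)
    (k : EuclideanSpace ℝ (Fin d) → EuclideanSpace ℝ (Fin d) → ℝ)
    (u : EuclideanSpace ℝ (Fin d) → ℝ) : ℝ :=
  ∫ z : EuclideanSpace ℝ (Fin d) × EuclideanSpace ℝ (Fin d),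
    |u z.1 - u z.2| ^ p * k z.1 z.2

set_option maxHeartbeats 1000000

/-- Case `p ≥ 2`: with `κ'_p = min(2⁻¹,2^{2-p})`, `κ_p = p-1` and
`c_p = 2^{p(p-2)/2} κ_p^{p/2}`, if `𝓔_k(u,u), 𝓔_k(v,v) < ∞` then `𝓔_k(u-v,u-v) < ∞`,
`D := 𝓔_k(u,u-v) - 𝓔_k(v,u-v)` is well defined and nonnegative,
`D ≥ κ'_p 𝓔_k(u-v,u-v)` and
`D^{p/2} ≤ c_p 𝓔_k(u-v,u-v)(𝓔_k(u,u)+𝓔_k(v,v))^{(p-2)/2}`. -/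
theorem stmt_7 (d : ℕ) (hd : 1 ≤ d) (p : ℝ) (hp : 2 ≤ p) (κ κ' c : ℝ)
    (hκ : κ = p - 1)
    (hκ' : κ' = min (2⁻¹ : ℝ) ((2 : ℝ) ^ (2 - p)))
    (hc : c = (2 : ℝ) ^ (p * (p - 2) / 2) * κ ^ (p / 2))
    (k : EuclideanSpace ℝ (Fin d) → EuclideanSpace ℝ (Fin d) → ℝ)
    (hk : Measurable fun z : EuclideanSpace ℝ (Fin d) × EuclideanSpace ℝ (Fin d) => k z.1 z.2)
    (hk0 : ∀ x y, 0 ≤ k x y)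
    (u v : EuclideanSpace ℝ (Fin d) → ℝ) (hu : Measurable u) (hv : Measurable v)
    (hEu : Integrable fun z : EuclideanSpace ℝ (Fin d) × EuclideanSpace ℝ (Fin d) =>
      |u z.1 - u z.2| ^ p * k z.1 z.2)
    (hEv : Integrable fun z : EuclideanSpace ℝ (Fin d) × EuclideanSpace ℝ (Fin d) =>
      |v z.1 - v z.2| ^ p * k z.1 z.2) :
    (Integrable fun z : EuclideanSpace ℝ (Fin d) × EuclideanSpace ℝ (Fin d) =>
      |(u - v) z.1 - (u - v) z.2| ^ p * k z.1 z.2) ∧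
    (Integrable fun z : EuclideanSpace ℝ (Fin d) × EuclideanSpace ℝ (Fin d) =>
      |u z.1 - u z.2| ^ (p - 2) * (u z.1 - u z.2) * ((u - v) z.1 - (u - v) z.2) * k z.1 z.2) ∧
    (Integrable fun z : EuclideanSpace ℝ (Fin d) × EuclideanSpace ℝ (Fin d) =>
      |v z.1 - v z.2| ^ (p - 2) * (v z.1 - v z.2) * ((u - v) z.1 - (u - v) z.2) * k z.1 z.2) ∧
    0 ≤ nlForm d p k u (u - v) - nlForm d p k v (u - v) ∧
    κ' * nlDiag d p k (u - v) ≤ nlForm d p k u (u - v) - nlForm d p k v (u - v) ∧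
    (nlForm d p k u (u - v) - nlForm d p k v (u - v)) ^ (p / 2) ≤
      c * nlDiag d p k (u - v) * (nlDiag d p k u + nlDiag d p k v) ^ ((p - 2) / 2) := by
  have hrw : ∀ z : EuclideanSpace ℝ (Fin d) × EuclideanSpace ℝ (Fin d),
      (u - v) z.1 - (u - v) z.2 = (u z.1 - u z.2) - (v z.1 - v z.2) := fun z => by
    simp only [Pi.sub_apply]; ring
  have hum : Measurable fun z : EuclideanSpace ℝ (Fin d) × EuclideanSpace ℝ (Fin d) =>
      u z.1 - u z.2 := (hu.comp measurable_fst).sub (hu.comp measurable_snd)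
  have hvm : Measurable fun z : EuclideanSpace ℝ (Fin d) × EuclideanSpace ℝ (Fin d) =>
      v z.1 - v z.2 := (hv.comp measurable_fst).sub (hv.comp measurable_snd)
  obtain ⟨h1, h2, h3, h4, h5, h6⟩ := NLAux.main (α := EuclideanSpace ℝ (Fin d) × EuclideanSpace ℝ (Fin d)) volume p κ' c hp hκ' (by rw [hc, hκ])
    (fun z => u z.1 - u z.2) (fun z => v z.1 - v z.2) (fun z => k z.1 z.2)
    hum hvm hk (fun z => hk0 z.1 z.2) hEu hEv
  have e1 : (fun z : EuclideanSpace ℝ (Fin d) × EuclideanSpace ℝ (Fin d) =>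
      |(u - v) z.1 - (u - v) z.2| ^ p * k z.1 z.2)
      = fun z => |(u z.1 - u z.2) - (v z.1 - v z.2)| ^ p * k z.1 z.2 :=
    funext fun z => by rw [hrw z]
  have e2 : (fun z : EuclideanSpace ℝ (Fin d) × EuclideanSpace ℝ (Fin d) =>
      |u z.1 - u z.2| ^ (p - 2) * (u z.1 - u z.2) * ((u - v) z.1 - (u - v) z.2) * k z.1 z.2)
      = fun z => |u z.1 - u z.2| ^ (p - 2) * (u z.1 - u z.2) *
          ((u z.1 - u z.2) - (v z.1 - v z.2)) * k z.1 z.2 :=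
    funext fun z => by rw [hrw z]
  have e3 : (fun z : EuclideanSpace ℝ (Fin d) × EuclideanSpace ℝ (Fin d) =>
      |v z.1 - v z.2| ^ (p - 2) * (v z.1 - v z.2) * ((u - v) z.1 - (u - v) z.2) * k z.1 z.2)
      = fun z => |v z.1 - v z.2| ^ (p - 2) * (v z.1 - v z.2) *
          ((u z.1 - u z.2) - (v z.1 - v z.2)) * k z.1 z.2 :=
    funext fun z => by rw [hrw z]
  have eF1 : nlForm d p k u (u - v) = ∫ z : EuclideanSpace ℝ (Fin d) × EuclideanSpace ℝ (Fin d), |u z.1 - u z.2| ^ (p - 2) * (u z.1 - u z.2) *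
      ((u z.1 - u z.2) - (v z.1 - v z.2)) * k z.1 z.2 := by
    unfold nlForm; rw [e2]
  have eF2 : nlForm d p k v (u - v) = ∫ z : EuclideanSpace ℝ (Fin d) × EuclideanSpace ℝ (Fin d), |v z.1 - v z.2| ^ (p - 2) * (v z.1 - v z.2) *
      ((u z.1 - u z.2) - (v z.1 - v z.2)) * k z.1 z.2 := by
    unfold nlForm; rw [e3]
  have eW : nlDiag d p k (u - v) = ∫ z : EuclideanSpace ℝ (Fin d) × EuclideanSpace ℝ (Fin d), |(u z.1 - u z.2) - (v z.1 - v z.2)| ^ p * k z.1 z.2 := by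
    unfold nlDiag; rw [e1]
  have eU : nlDiag d p k u = ∫ z : EuclideanSpace ℝ (Fin d) × EuclideanSpace ℝ (Fin d), |u z.1 - u z.2| ^ p * k z.1 z.2 := rfl
  have eV : nlDiag d p k v = ∫ z : EuclideanSpace ℝ (Fin d) × EuclideanSpace ℝ (Fin d), |v z.1 - v z.2| ^ p * k z.1 z.2 := rfl
  refine ⟨by rw [e1]; exact h1, by rw [e2]; exact h2, by rw [e3]; exact h3, ?_, ?_, ?_⟩
  · rw [eF1, eF2]; exact h4
  · rw [eF1, eF2, eW]; exact h5
  · rw [eF1, eF2, eW, eU, eV]; exact h6
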